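/- In the Braess network with quadratic cost c(x) = x − x²/2 and incentives u_v^{p2} = u_w^{p2} = 0.2 (all other incentives zero), the flow f = (f_{p1}, f_{p2}, f_{p3}) = (1/2, 0, 1/2) is a Wardrop equilibrium: paths p1 and p3 each have cost 15/8 while path p2 has cost 43/20 ≥ 15/8, and the social cost equals 15/8. -/
import Mathlib

/-- Quadratic latency `c(x) = x - x²/2` on edges `e1` and `e4` of the Braess network. -/
noncomputable def c (x : ℝ) : ℝ := x - x^2/2

/-- Path costs in the Braess network (paths `p1, p2, p3` indexed by `Fin 3`), with
incentives `uv2` at node `v` and `uw2` at node `w` applied to path `p2` (all other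
incentives zero).  Edge flows: `f_{e1} = f_v = f 0 + f 1`, `f_{e4} = f_w = f 1 + f 2`;
edges `e2`, `e3` have constant cost `1`, edge `e5` has cost `0`; base node costs
`c_v(x) = c_w(x) = x`. -/
noncomputable def cost (uv2 uw2 : ℝ) (f : Fin 3 → ℝ) : Fin 3 → ℝ :=
  ![ c (f 0 + f 1) + 1 + (f 0 + f 1),
     c (f 0 + f 1) + 0 + c (f 1 + f 2) + ((f 0 + f 1) + uv2) + ((f 1 + f 2) + uw2),
     1 + c (f 1 + f 2) + (f 1 + f 2) ]

/-- In the quadratic Braess network with incentives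
`u_v^{p2} = u_w^{p2} = 0.2`, the flow `(1/2, 0, 1/2)` is a Wardrop equilibrium: paths `p1`
and `p3` each have cost `15/8`, path `p2` has cost `43/20 ≥ 15/8`, and the social cost
equals `15/8`. -/
theorem braess_quadratic_incentivized_equilibrium :
    let f : Fin 3 → ℝ := ![1/2, 0, 1/2]
    (∀ i j : Fin 3, 0 < f i → cost 0.2 0.2 f i ≤ cost 0.2 0.2 f j) ∧
    cost 0.2 0.2 f 0 = 15/8 ∧ cost 0.2 0.2 f 2 = 15/8 ∧
    cost 0.2 0.2 f 1 = 43/20 ∧ (15/8 : ℝ) ≤ 43/20 ∧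
    (∑ i, f i * cost 0.2 0.2 f i) = 15/8 := by
  intro f
  have h0 : cost 0.2 0.2 f 0 = 15/8 := by simp [cost, c, f]; norm_num
  have h1 : cost 0.2 0.2 f 1 = 43/20 := by simp [cost, c, f]; norm_num
  have h2 : cost 0.2 0.2 f 2 = 15/8 := by simp [cost, c, f]; norm_num
  refine ⟨?_, h0, h2, h1, by norm_num, ?_⟩
  · intro i j hi
    fin_cases i <;> fin_cases j <;>
      simp_all [f, h0, h1, h2] <;> norm_num
  · rw [Fin.sum_univ_three, h0, h1, h2]
    simp [f]; norm_num
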